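/- Define g₂ : (1,∞) → ℝ by g₂(r) = −32π/(r²−1) − 48π r^{−1} log((r+1)/(r−1)) − 128π log(1 − r^{−2}). Then g₂ is strictly increasing on (1,∞), and as r → ∞ one has the asymptotic expansion g₂(r) = −(128π/15) r^{−6} + O(r^{−8}), i.e. there exist constants C > 0 and r₀ > 1 such that |g₂(r) + (128π/15) r^{−6}| ≤ C r^{−8} for all r ≥ r₀. -/

import Mathlib

open Real

/-- The radial profile of the leading-order reduced Willmore energy of outlying
coordinate spheres in Schwarzschild of mass 2. -/
noncomputable def g2 (r : ℝ) : ℝ :=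
  -(32 * π) / (r ^ 2 - 1) - 48 * π * r⁻¹ * Real.log ((r + 1) / (r - 1))
    - 128 * π * Real.log (1 - (r ^ 2)⁻¹)

section aux
open Set

lemma helper_mono {F F' : ℝ → ℝ} {b : ℝ} (hb : 0 ≤ b)
    (hd : ∀ x, 0 ≤ x → x ≤ b → HasDerivAt F (F' x) x)
    (hpos : ∀ x, 0 ≤ x → x ≤ b → 0 ≤ F' x) :
    F 0 ≤ F b := by
  have hmono : MonotoneOn F (Set.Icc 0 b) := by
    apply monotoneOn_of_deriv_nonneg (convex_Icc 0 b)
    · intro x hx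
      exact (hd x hx.1 hx.2).continuousAt.continuousWithinAt
    · intro x hx
      rw [interior_Icc] at hx
      exact (hd x hx.1.le hx.2.le).differentiableAt.differentiableWithinAt
    · intro x hx
      rw [interior_Icc] at hx
      rw [(hd x hx.1.le hx.2.le).deriv]
      exact hpos x hx.1.le hx.2.le
  exact hmono (Set.left_mem_Icc.2 hb) (Set.right_mem_Icc.2 hb) hb

lemma hd_log1 {t : ℝ} (h : (1:ℝ) + t ≠ 0) :
    HasDerivAt (fun s : ℝ => Real.log (1 + s)) (1/(1+t)) t := by
  have h1 : HasDerivAt (fun s : ℝ => 1 + s) 1 t := (hasDerivAt_id t).const_add 1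
  exact ((Real.hasDerivAt_log h).comp t h1).congr_deriv (by rw [mul_one, one_div])

lemma hd_log2 {t : ℝ} (h : (1:ℝ) - t ≠ 0) :
    HasDerivAt (fun s : ℝ => Real.log (1 - s)) (-(1/(1-t))) t := by
  have h1 : HasDerivAt (fun s : ℝ => 1 - s) (-1) t := by
    simpa using (hasDerivAt_id t).const_sub 1
  have := (Real.hasDerivAt_log h).comp t h1
  refine this.congr_deriv ?_
  field_simp

lemma hd_poly5 (t : ℝ) :
    HasDerivAt (fun s : ℝ => 2*s + 2*s^3/3 + 2*s^5/5) (2 + 2*t^2 + 2*t^4) t := by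
  have h1 := hasDerivAt_id t
  have h3 := hasDerivAt_pow 3 t
  have h5 := hasDerivAt_pow 5 t
  refine (((h1.const_mul 2).add ((h3.const_mul 2).div_const 3)).add
    ((h5.const_mul 2).div_const 5)).congr_deriv ?_
  push_cast; ring

/-- lower bound for log((1+x)/(1-x)) as sum of log's -/
lemma L_lb {x : ℝ} (h0 : 0 ≤ x) (h1 : x < 1) :
    2*x + 2*x^3/3 + 2*x^5/5 ≤ Real.log (1+x) - Real.log (1-x) := by
  have key := helper_mono (F := fun s => Real.log (1+s) - Real.log (1-s) - (2*s + 2*s^3/3 + 2*s^5/5))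
    (F' := fun s => 1/(1+s) + 1/(1-s) - (2 + 2*s^2 + 2*s^4)) (b := x) h0
    (fun s hs0 hsb => by
      have hs1 : s < 1 := lt_of_le_of_lt hsb h1
      have ha : (1:ℝ) + s ≠ 0 := by linarith
      have hb' : (1:ℝ) - s ≠ 0 := by intro hc; linarith [hc]
      have := ((hd_log1 ha).sub (hd_log2 hb')).sub (hd_poly5 s)
      refine this.congr_deriv ?_
      ring)
    (fun s hs0 hsb => by
      have hs1 : s < 1 := lt_of_le_of_lt hsb h1
      have ha : (0:ℝ) < 1 + s := by linarith
      have hb' : (0:ℝ) < 1 - s := by linarith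
      have he : 1/(1+s) + 1/(1-s) - (2 + 2*s^2 + 2*s^4) = 2*s^6/((1+s)*(1-s)) := by
        field_simp
        ring
      beta_reduce
      rw [he]
      positivity)
  simp only [Real.log_one, add_zero, sub_zero, mul_zero, zero_pow] at key
  try norm_num at key
  try linarith

/-- upper bound on [0,1/2] -/
lemma L_ub {x : ℝ} (h0 : 0 ≤ x) (h1 : x ≤ 1/2) :
    Real.log (1+x) - Real.log (1-x) ≤ 2*x + 2*x^3/3 + 2*x^5/5 + (8/21)*x^7 := by
  have key := helper_mono (F := fun s => (2*s + 2*s^3/3 + 2*s^5/5 + (8/21)*s^7) - (Real.log (1+s) - Real.log (1-s)))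
    (F' := fun s => (2 + 2*s^2 + 2*s^4 + (8/3)*s^6) - (1/(1+s) + 1/(1-s))) (b := x) h0
    (fun s hs0 hsb => by
      have hs1 : s ≤ 1/2 := le_trans hsb h1
      have ha : (1:ℝ) + s ≠ 0 := by linarith
      have hb' : (1:ℝ) - s ≠ 0 := by intro hc; linarith
      have h7 : HasDerivAt (fun u : ℝ => 2*u + 2*u^3/3 + 2*u^5/5 + (8/21)*u^7)
          (2 + 2*s^2 + 2*s^4 + (8/3)*s^6) s := by
        have := (hd_poly5 s).add ((hasDerivAt_pow 7 s).const_mul (8/21))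
        refine this.congr_deriv ?_
        push_cast; ring
      have := h7.sub ((hd_log1 ha).sub (hd_log2 hb'))
      refine this.congr_deriv ?_
      ring)
    (fun s hs0 hsb => by
      have hs1 : s ≤ 1/2 := le_trans hsb h1
      have ha : (0:ℝ) < 1 + s := by linarith
      have hb' : (0:ℝ) < 1 - s := by linarith
      have he : (2 + 2*s^2 + 2*s^4 + (8/3)*s^6) - (1/(1+s) + 1/(1-s))
          = (2/3)*s^6*(1 - 4*s^2)/((1+s)*(1-s)) := by
        field_simp
        ring
      beta_reduce
      rw [he]
      have : (0:ℝ) ≤ 1 - 4*s^2 := by nlinarith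
      positivity)
  simp only [add_zero, sub_zero, Real.log_one] at key
  try norm_num at key
  try linarith

lemma log_lb {y : ℝ} (h0 : 0 ≤ y) (h1 : y < 1) :
    y + y^2/2 + y^3/3 ≤ -Real.log (1-y) := by
  have key := helper_mono (F := fun s => -Real.log (1-s) - (s + s^2/2 + s^3/3))
    (F' := fun s => 1/(1-s) - (1 + s + s^2)) (b := y) h0
    (fun s hs0 hsb => by
      have hs1 : s < 1 := lt_of_le_of_lt hsb h1
      have hb' : (1:ℝ) - s ≠ 0 := by intro hc; linarith
      have hp : HasDerivAt (fun u : ℝ => u + u^2/2 + u^3/3) (1 + s + s^2) s := by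
        have := ((hasDerivAt_id s).add ((hasDerivAt_pow 2 s).div_const 2)).add
          ((hasDerivAt_pow 3 s).div_const 3)
        refine this.congr_deriv ?_
        push_cast; ring
      have := (hd_log2 hb').neg.sub hp
      refine this.congr_deriv ?_
      ring)
    (fun s hs0 hsb => by
      have hs1 : s < 1 := lt_of_le_of_lt hsb h1
      have hb' : (0:ℝ) < 1 - s := by linarith
      have he : 1/(1-s) - (1 + s + s^2) = s^3/(1-s) := by
        field_simp; ring
      beta_reduce
      rw [he]; positivity)
  simp only [add_zero, sub_zero, Real.log_one] at key
  try norm_num at key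
  try linarith

lemma log_ub {y : ℝ} (h0 : 0 ≤ y) (h1 : y ≤ 1/2) :
    -Real.log (1-y) ≤ y + y^2/2 + y^3/3 + y^4/2 := by
  have key := helper_mono (F := fun s => (s + s^2/2 + s^3/3 + s^4/2) + Real.log (1-s))
    (F' := fun s => (1 + s + s^2 + 2*s^3) - 1/(1-s)) (b := y) h0
    (fun s hs0 hsb => by
      have hs1 : s ≤ 1/2 := le_trans hsb h1
      have hb' : (1:ℝ) - s ≠ 0 := by intro hc; linarith
      have hp : HasDerivAt (fun u : ℝ => u + u^2/2 + u^3/3 + u^4/2) (1 + s + s^2 + 2*s^3) s := by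
        have := (((hasDerivAt_id s).add ((hasDerivAt_pow 2 s).div_const 2)).add
          ((hasDerivAt_pow 3 s).div_const 3)).add ((hasDerivAt_pow 4 s).div_const 2)
        refine this.congr_deriv ?_
        push_cast; ring
      have := hp.add (hd_log2 hb')
      refine this.congr_deriv ?_
      try ring)
    (fun s hs0 hsb => by
      have hs1 : s ≤ 1/2 := le_trans hsb h1
      have hb' : (0:ℝ) < 1 - s := by linarith
      have he : (1 + s + s^2 + 2*s^3) - 1/(1-s) = s^3*(1 - 2*s)/(1-s) := by
        field_simp; ring
      beta_reduce
      rw [he]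
      have : (0:ℝ) ≤ 1 - 2*s := by linarith
      positivity)
  simp only [add_zero, sub_zero, Real.log_one] at key
  try norm_num at key
  try linarith


lemma log_ratio {r : ℝ} (hr : 1 < r) :
    Real.log ((r+1)/(r-1)) = Real.log (1 + r⁻¹) - Real.log (1 - r⁻¹) := by
  have hr0 : (0:ℝ) < r := by linarith
  have e1 : (1:ℝ) + r⁻¹ = (r+1)/r := by field_simp
  have e2 : (1:ℝ) - r⁻¹ = (r-1)/r := by field_simp
  rw [e1, e2, Real.log_div (by linarith) hr0.ne', Real.log_div (by linarith) hr0.ne',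
    Real.log_div (by linarith) (by linarith)]
  ring

lemma g2_deriv {r : ℝ} (hr : 1 < r) :
    HasDerivAt g2
      (π * (64*r/(r^2-1)^2 + 48*Real.log ((r+1)/(r-1))/r^2 - 160/(r*(r^2-1)))) r := by
  have hr0 : (0:ℝ) < r := by linarith
  have h1 : r - 1 ≠ 0 := by intro h; linarith
  have h2 : r + 1 ≠ 0 := by intro h; linarith
  have hu0 : (0:ℝ) < r^2 - 1 := by nlinarith
  have hu : r^2 - 1 ≠ 0 := hu0.ne'
  have hq : (r+1)/(r-1) ≠ 0 := div_ne_zero h2 h1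
  have hr2 : (r:ℝ)^2 ≠ 0 := by positivity
  have hv0 : (0:ℝ) < 1 - (r^2)⁻¹ := by
    have : (r^2)⁻¹ < 1 := by
      rw [inv_lt_one_iff₀]; right; nlinarith
    linarith
  have hv : 1 - (r^2)⁻¹ ≠ 0 := hv0.ne'
  -- T1
  have hu' : HasDerivAt (fun s : ℝ => s^2 - 1) (2*r) r := by
    simpa using (hasDerivAt_pow 2 r).sub_const 1
  have hT1 : HasDerivAt (fun s : ℝ => -(32*π)/(s^2-1))
      ((0*(r^2-1) - (-(32*π))*(2*r))/(r^2-1)^2) r :=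
    (hasDerivAt_const r (-(32*π))).div hu' hu
  -- T2
  have ha : HasDerivAt (fun s : ℝ => 48*π*s⁻¹) (48*π * -(r^2)⁻¹) r := by
    have := (hasDerivAt_inv hr0.ne').const_mul (48*π)
    convert this using 2
    try ring
  have hq' : HasDerivAt (fun s : ℝ => (s+1)/(s-1)) ((1*(r-1) - (r+1)*1)/(r-1)^2) r :=
    ((hasDerivAt_id r).add_const 1).div ((hasDerivAt_id r).sub_const 1) h1
  have hlogq : HasDerivAt (fun s : ℝ => Real.log ((s+1)/(s-1)))
      (((r+1)/(r-1))⁻¹ * ((1*(r-1) - (r+1)*1)/(r-1)^2)) r :=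
    (Real.hasDerivAt_log hq).comp (h₂ := Real.log) r hq'
  have hT2 := ha.mul hlogq
  -- T3
  have hw : HasDerivAt (fun s : ℝ => 1 - (s^2)⁻¹) (-(-(2*r^1)/((r^2)^2))) r := by
    have hp := (hasDerivAt_pow 2 r).inv hr2
    have := hp.const_sub 1
    refine this.congr_deriv ?_
    try push_cast
    try ring
  have hlogw : HasDerivAt (fun s : ℝ => Real.log (1 - (s^2)⁻¹))
      ((1 - (r^2)⁻¹)⁻¹ * (-(-(2*r^1)/((r^2)^2)))) r :=
    (Real.hasDerivAt_log hv).comp (h₂ := Real.log) r hw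
  have hT3 := hlogw.const_mul (128*π)
  have hall := (hT1.sub hT2).sub hT3
  have hg : HasDerivAt g2
      ((0*(r^2-1) - (-(32*π))*(2*r))/(r^2-1)^2
        - (48*π * -(r^2)⁻¹ * Real.log ((r+1)/(r-1))
            + 48*π*r⁻¹ * (((r+1)/(r-1))⁻¹ * ((1*(r-1) - (r+1)*1)/(r-1)^2)))
        - 128*π * ((1 - (r^2)⁻¹)⁻¹ * (-(-(2*r^1)/((r^2)^2))))) r := hall
  convert hg using 1
  have e1 : ((r+1)/(r-1))⁻¹ = (r-1)/(r+1) := by rw [inv_div]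
  rw [e1]
  field_simp
  ring

lemma abs_bound {x L M : ℝ} (hx0 : 0 < x) (hx2 : x ≤ 1/2)
    (hL1 : 2*x + 2*x^3/3 + 2*x^5/5 ≤ L)
    (hL2 : L ≤ 2*x + 2*x^3/3 + 2*x^5/5 + (8/21)*x^7)
    (hM1 : x^2 + x^4/2 + x^6/3 ≤ M)
    (hM2 : M ≤ x^2 + x^4/2 + x^6/3 + x^8/2) :
    |(-32*π*(x^2/(1-x^2)) - 48*π*x*L + 128*π*M) + (128*π/15)*x^6| ≤ 500*x^8 := by
  have h1mx : (0:ℝ) < 1 - x^2 := by nlinarith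
  have h1mx' : (3:ℝ)/4 ≤ 1 - x^2 := by nlinarith
  have hq : x^2/(1-x^2) = x^2 + x^4 + x^6 + x^8/(1-x^2) := by
    field_simp; ring
  have hE3a : (0:ℝ) ≤ x^8/(1-x^2) := by positivity
  have hE3b : x^8/(1-x^2) ≤ (4/3)*x^8 := by
    rw [div_le_iff₀ h1mx]
    nlinarith [pow_nonneg hx0.le 8]
  have hπ : (0:ℝ) < π := Real.pi_pos
  have hπ4 : π ≤ 4 := by linarith [Real.pi_le_four]
  have hx8 : (0:ℝ) < x^8 := by positivity
  have hx7 : (0:ℝ) < x^7 := by positivity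
  rw [hq, abs_le]
  constructor <;> nlinarith [mul_le_mul_of_nonneg_left hE3b hπ.le,
    mul_le_mul_of_nonneg_left hL2 hπ.le, mul_le_mul_of_nonneg_left hL1 hπ.le,
    mul_le_mul_of_nonneg_left hM2 hπ.le, mul_le_mul_of_nonneg_left hM1 hπ.le,
    mul_le_mul_of_nonneg_left hE3a hπ.le, mul_pos hx0 hx8, mul_pos hx0 hx7,
    mul_le_mul_of_nonneg_left hπ4 hx8.le, mul_le_mul_of_nonneg_left hπ4 hx7.le,
    mul_pos hπ hx8, mul_pos hπ hx7]

lemma L_lb_r {r : ℝ} (hr : 1 < r) :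
    2/r + 2/(3*r^3) + 2/(5*r^5) ≤ Real.log ((r+1)/(r-1)) := by
  have hr0 : (0:ℝ) < r := by linarith
  have hx0 : (0:ℝ) ≤ r⁻¹ := by positivity
  have hx1 : r⁻¹ < 1 := by
    rw [inv_lt_one_iff₀]; right; exact hr
  have h := L_lb hx0 hx1
  rw [← log_ratio hr] at h
  calc 2/r + 2/(3*r^3) + 2/(5*r^5)
      = 2*r⁻¹ + 2*(r⁻¹)^3/3 + 2*(r⁻¹)^5/5 := by field_simp
    _ ≤ _ := h

end aux

/-- `g₂` is strictly increasing on `(1,∞)` and `g₂(r) = −(128π/15) r⁻⁶ + O(r⁻⁸)`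
as `r → ∞`. -/
theorem stmt11 :
    StrictMonoOn g2 (Set.Ioi 1) ∧
    ∃ C > 0, ∃ r₀ > 1, ∀ r ≥ r₀,
      |g2 r + (128 * π / 15) * (r ^ 6)⁻¹| ≤ C * (r ^ 8)⁻¹ := by
  constructor
  · -- monotonicity
    apply strictMonoOn_of_deriv_pos (convex_Ioi 1)
    · intro r hr
      exact (g2_deriv hr).differentiableAt.continuousAt.continuousWithinAt
    · intro r hr
      rw [interior_Ioi] at hr
      have hr : (1:ℝ) < r := hr
      have hr0 : (0:ℝ) < r := by linarith
      have hu0 : (0:ℝ) < r^2 - 1 := by nlinarith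
      rw [(g2_deriv hr).deriv]
      have h2 : 96*r^4 + 32*r^2 + 96/5 ≤ 48*r^5*Real.log ((r+1)/(r-1)) := by
        have h := mul_le_mul_of_nonneg_left (L_lb_r hr) (show (0:ℝ) ≤ 48*r^5 by positivity)
        have e : 48*r^5*(2/r + 2/(3*r^3) + 2/(5*r^5)) = 96*r^4 + 32*r^2 + 96/5 := by
          field_simp; ring
        linarith [e ▸ h]
      have h3 := mul_le_mul_of_nonneg_right h2 (sq_nonneg (r^2-1))
      have hN : 0 < 64*r^8 + 48*r^5*Real.log ((r+1)/(r-1))*(r^2-1)^2 - 160*r^6*(r^2-1) := by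
        nlinarith [h3, sq_nonneg (r^2-1), sq_nonneg r, mul_pos hr0 hr0, hr]
      have he : π * (64*r/(r^2-1)^2 + 48*Real.log ((r+1)/(r-1))/r^2 - 160/(r*(r^2-1)))
          = π * ((64*r^8 + 48*r^5*Real.log ((r+1)/(r-1))*(r^2-1)^2 - 160*r^6*(r^2-1))
              / (r^7*(r^2-1)^2)) := by
        field_simp
      rw [he]
      exact mul_pos Real.pi_pos (div_pos hN (by positivity))
  · -- asymptotics
    refine ⟨500, by norm_num, 2, by norm_num, ?_⟩
    intro r hr
    have hr1 : (1:ℝ) < r := by linarith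
    have hr0 : (0:ℝ) < r := by linarith
    have hx0 : (0:ℝ) < r⁻¹ := by positivity
    have hx2 : r⁻¹ ≤ 1/2 := by
      rw [inv_le_comm₀ hr0 (by norm_num)]
      linarith
    have hx1 : r⁻¹ < 1 := by linarith
    have hy0 : (0:ℝ) ≤ (r⁻¹)^2 := by positivity
    have hy1 : (r⁻¹)^2 ≤ 1/2 := by nlinarith
    have hy2 : (r⁻¹)^2 < 1 := by nlinarith
    have hu0 : (0:ℝ) < r^2 - 1 := by nlinarith
    have h1mx : (0:ℝ) < 1 - (r⁻¹)^2 := by nlinarith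
    have hrx : (r^2)⁻¹ = (r⁻¹)^2 := (inv_pow r 2).symm
    have hr6 : (r^6)⁻¹ = (r⁻¹)^6 := (inv_pow r 6).symm
    have hr8 : (r^8)⁻¹ = (r⁻¹)^8 := (inv_pow r 8).symm
    have hA : -(32*π)/(r^2-1) = -32*π*((r⁻¹)^2/(1-(r⁻¹)^2)) := by
      field_simp
      try ring
    have hkey : g2 r + (128 * π / 15) * (r^6)⁻¹
        = (-32*π*((r⁻¹)^2/(1-(r⁻¹)^2))
            - 48*π*r⁻¹*(Real.log (1+r⁻¹) - Real.log (1-r⁻¹))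
            + 128*π*(-Real.log (1-(r⁻¹)^2))) + (128*π/15)*(r⁻¹)^6 := by
      rw [g2, log_ratio hr1, hrx, hr6, hA]
      ring
    rw [hkey, hr8]
    refine abs_bound hx0 hx2 ?_ ?_ ?_ ?_
    · have h := L_lb hx0.le hx1; linarith
    · have h := L_ub hx0.le hx2; linarith
    · have h := log_lb hy0 hy2
      nlinarith [h]
    · have h := log_ub hy0 hy1
      nlinarith [h]
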